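/- For all natural numbers m1, m2, the Laurent polynomial ((x2+1)/x1)^{m1} · x2^{m2} is log-concave. -/

import Mathlib

/-- The Laurent monomial with exponent vector `d` and coefficient `1`,
as an element of the ring of multivariate Laurent polynomials
(the add-monoid algebra of `ℤ` over the group of exponent vectors). -/
noncomputable def Lmon (m : ℕ) (d : Fin m →₀ ℤ) : AddMonoidAlgebra ℤ (Fin m →₀ ℤ) :=
  AddMonoidAlgebra.single d 1

/-- The Laurent monomial `xᵢ^e`. -/
noncomputable def LX (m : ℕ) (i : Fin m) (e : ℤ) : AddMonoidAlgebra ℤ (Fin m →₀ ℤ) :=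
  Lmon m (Finsupp.single i e)

/-- A multivariate Laurent polynomial is log-concave if its coefficients are
nonnegative and, in each variable separately, the square of every coefficient is
at least the product of its two neighboring coefficients. -/
def IsLogConcave {m : ℕ} (f : AddMonoidAlgebra ℤ (Fin m →₀ ℤ)) : Prop :=
  (∀ d, 0 ≤ f.coeff d) ∧
  ∀ (j : Fin m) (d : Fin m →₀ ℤ),
    f.coeff (d - Finsupp.single j 1) * f.coeff (d + Finsupp.single j 1) ≤ (f.coeff d) ^ 2

/-- Log-concavity of binomial coefficients. -/
lemma choose_lc (n j : ℕ) : n.choose j * n.choose (j + 2) ≤ n.choose (j + 1) ^ 2 := by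
  have h1 : n.choose (j + 1) * (j + 1) = n.choose j * (n - j) := Nat.choose_succ_right_eq n j
  have h2 : n.choose (j + 2) * (j + 2) = n.choose (j + 1) * (n - (j + 1)) :=
    Nat.choose_succ_right_eq n (j + 1)
  have hmul : n.choose j * n.choose (j + 2) * ((j + 1) * (j + 2))
      ≤ n.choose (j + 1) ^ 2 * ((j + 1) * (j + 2)) := by
    have e1 : n.choose j * n.choose (j + 2) * ((j + 1) * (j + 2))
        = n.choose j * (n.choose (j + 2) * (j + 2)) * (j + 1) := by ring
    have e2 : n.choose (j + 1) ^ 2 * ((j + 1) * (j + 2))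
        = n.choose (j + 1) * (n.choose (j + 1) * (j + 1)) * (j + 2) := by ring
    rw [e1, e2, h2, h1]
    have hxy : n - (j + 1) ≤ n - j := by omega
    calc n.choose j * (n.choose (j + 1) * (n - (j + 1))) * (j + 1)
        = n.choose j * n.choose (j + 1) * (n - (j + 1)) * (j + 1) := by ring
      _ ≤ n.choose j * n.choose (j + 1) * (n - j) * (j + 2) :=
          Nat.mul_le_mul (Nat.mul_le_mul_left _ hxy) (by omega)
      _ = n.choose (j + 1) * (n.choose j * (n - j)) * (j + 2) := by ring
  exact Nat.le_of_mul_le_mul_right hmul (by positivity)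

/-- The coefficient profile of the cluster monomial in the second variable. -/
def cc (m1 m2 : ℕ) (n : ℤ) : ℤ :=
  if (m2 : ℤ) ≤ n then (m1.choose (n - m2).toNat : ℤ) else 0

lemma cc_nonneg (m1 m2 : ℕ) (n : ℤ) : 0 ≤ cc m1 m2 n := by
  unfold cc; split <;> positivity

lemma cc_lc (m1 m2 : ℕ) (n : ℤ) :
    cc m1 m2 (n - 1) * cc m1 m2 (n + 1) ≤ cc m1 m2 n ^ 2 := by
  by_cases h1 : (m2 : ℤ) ≤ n - 1
  · have h2 : (m2 : ℤ) ≤ n := by omega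
    have h3 : (m2 : ℤ) ≤ n + 1 := by omega
    unfold cc
    rw [if_pos h1, if_pos h2, if_pos h3]
    obtain ⟨j, hj⟩ : ∃ j : ℕ, (n - m2).toNat = j + 1 := ⟨(n - m2).toNat - 1, by omega⟩
    have e1 : (n - 1 - m2).toNat = j := by omega
    have e2 : (n + 1 - m2).toNat = j + 2 := by omega
    rw [hj, e1, e2]
    exact_mod_cast choose_lc m1 j
  · have : cc m1 m2 (n - 1) = 0 := by unfold cc; rw [if_neg h1]
    rw [this, zero_mul]
    positivity

lemma cc_sum (m1 m2 : ℕ) (n : ℤ) :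
    (∑ k ∈ Finset.range (m1 + 1), (if (k : ℤ) + m2 = n then (m1.choose k : ℤ) else 0))
      = cc m1 m2 n := by
  unfold cc
  split_ifs with h
  · by_cases ht : (n - m2).toNat < m1 + 1
    · rw [Finset.sum_eq_single_of_mem (n - m2).toNat (Finset.mem_range.mpr ht)]
      · rw [if_pos (by omega)]
      · intro k _ hk
        rw [if_neg (by omega)]
    · rw [Finset.sum_eq_zero, Nat.choose_eq_zero_of_lt (by omega)]
      · simp
      · intro k hk
        rw [Finset.mem_range] at hk
        rw [if_neg (by omega)]
  · apply Finset.sum_eq_zero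
    intro k _
    rw [if_neg (by omega)]

lemma pair_eq (a b : ℤ) (d : Fin 2 →₀ ℤ) :
    Finsupp.single (0 : Fin 2) a + Finsupp.single 1 b = d ↔ d 0 = a ∧ d 1 = b := by
  constructor
  · rintro rfl
    simp [Finsupp.single_apply]
  · rintro ⟨h0, h1⟩
    ext i
    fin_cases i <;> simp [Finsupp.single_apply, ← h0, ← h1]

lemma expand (m1 m2 : ℕ) :
    ((LX 2 1 1 + 1) * LX 2 0 (-1)) ^ m1 * (LX 2 1 1) ^ m2
      = ∑ k ∈ Finset.range (m1 + 1),
          AddMonoidAlgebra.single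
            (Finsupp.single (0 : Fin 2) (-(m1 : ℤ)) + Finsupp.single 1 ((k : ℤ) + m2))
            (m1.choose k : ℤ) := by
  rw [mul_pow, add_pow, Finset.sum_mul, Finset.sum_mul]
  refine Finset.sum_congr rfl fun k hk => ?_
  simp only [one_pow, mul_one, LX, Lmon]
  rw [AddMonoidAlgebra.single_pow, AddMonoidAlgebra.single_pow, AddMonoidAlgebra.single_pow]
  rw [AddMonoidAlgebra.natCast_def]
  rw [AddMonoidAlgebra.single_mul_single, AddMonoidAlgebra.single_mul_single,
    AddMonoidAlgebra.single_mul_single]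
  congr 1
  · ext i
    fin_cases i <;> simp [Finsupp.single_apply]
  · simp

lemma coeff_eq (m1 m2 : ℕ) (d : Fin 2 →₀ ℤ) :
    (((LX 2 1 1 + 1) * LX 2 0 (-1)) ^ m1 * (LX 2 1 1) ^ m2).coeff d
      = if d 0 = -(m1 : ℤ) then cc m1 m2 (d 1) else 0 := by
  rw [expand m1 m2]
  rw [AddMonoidAlgebra.coeff_sum, Finset.sum_apply']
  by_cases h : d 0 = -(m1 : ℤ)
  · rw [if_pos h, ← cc_sum m1 m2 (d 1)]
    refine Finset.sum_congr rfl fun k _ => ?_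
    rw [AddMonoidAlgebra.coeff_single_apply]
    by_cases hc : (k : ℤ) + m2 = d 1
    · rw [if_pos ((pair_eq _ _ d).mpr ⟨h, hc.symm⟩), if_pos hc]
    · rw [if_neg (fun he => hc (((pair_eq _ _ d).mp he).2.symm)), if_neg hc]
  · rw [if_neg h]
    apply Finset.sum_eq_zero
    intro k _
    rw [AddMonoidAlgebra.coeff_single_apply, if_neg (fun he => h ((pair_eq _ _ d).mp he).1)]

/-- The cluster monomial `((x2+1)/x1)^{m1} * x2^{m2}` of type `A₂` is a log-concave
Laurent polynomial. -/
theorem logConcave_A2_cluster_monomial_second (m1 m2 : ℕ) :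
    IsLogConcave (((LX 2 1 1 + 1) * LX 2 0 (-1)) ^ m1 * (LX 2 1 1) ^ m2) := by
  constructor
  · intro d
    rw [coeff_eq]
    split
    · exact cc_nonneg m1 m2 _
    · exact le_refl _
  · intro j d
    rw [coeff_eq, coeff_eq, coeff_eq]
    have hj : j = 0 ∨ j = 1 := by
      rcases j with ⟨v, hv⟩
      simp only [Fin.ext_iff]
      omega
    rcases hj with rfl | rfl
    · -- direction x1 : one of the two shifted coefficients vanishes
      have hsub : ((d - Finsupp.single (0 : Fin 2) 1 : Fin 2 →₀ ℤ)) 0 = d 0 - 1 := by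
        simp [Finsupp.single_apply]
      have hadd : ((d + Finsupp.single (0 : Fin 2) 1 : Fin 2 →₀ ℤ)) 0 = d 0 + 1 := by
        simp [Finsupp.single_apply]
      by_cases h : d 0 - 1 = -(m1 : ℤ)
      · rw [hsub, hadd, if_neg (show ¬(d 0 + 1 = -(m1 : ℤ)) by omega), mul_zero]
        positivity
      · rw [hsub, if_neg (show ¬(d 0 - 1 = -(m1 : ℤ)) from h), zero_mul]
        positivity
    · -- direction x2 : log-concavity of binomial coefficients
      have hsub0 : ((d - Finsupp.single (1 : Fin 2) 1 : Fin 2 →₀ ℤ)) 0 = d 0 := by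
        simp [Finsupp.single_apply]
      have hadd0 : ((d + Finsupp.single (1 : Fin 2) 1 : Fin 2 →₀ ℤ)) 0 = d 0 := by
        simp [Finsupp.single_apply]
      have hsub1 : ((d - Finsupp.single (1 : Fin 2) 1 : Fin 2 →₀ ℤ)) 1 = d 1 - 1 := by
        simp [Finsupp.single_apply]
      have hadd1 : ((d + Finsupp.single (1 : Fin 2) 1 : Fin 2 →₀ ℤ)) 1 = d 1 + 1 := by
        simp [Finsupp.single_apply]
      rw [hsub0, hadd0, hsub1, hadd1]
      by_cases h : d 0 = -(m1 : ℤ)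
      · rw [if_pos h, if_pos h, if_pos h]
        exact cc_lc m1 m2 (d 1)
      · rw [if_neg h, if_neg h, if_neg h]
        simp
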